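/- Let d be a nonnegative integer and (f_n) a sequence of positive reals with f_n/n^d → 1. Let (ε_N) satisfy |ε_N| ≤ C/N for all N. Then N^{-(d+1)} ∑_{n=0}^{N-1} f_n (η+ε_N)^n → 0 as N → ∞, uniformly for η on compact subsets of the unit circle minus the point 1 and for C on compact subsets of [0,∞). -/

import Mathlib

open Complex Filter Finset

lemma aux_cesaro (d : ℕ) (g : ℕ → ℝ) (hg : ∀ n, 0 ≤ g n)
    (h : Tendsto (fun n => g n / (n:ℝ) ^ d) atTop (nhds 0)) :
    Tendsto (fun N : ℕ => (∑ n ∈ Finset.range N, g n) / (N:ℝ) ^ (d+1)) atTop (nhds 0) := by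
  set h' : ℕ → ℝ := fun n => g n / (n:ℝ) ^ d with hh'def
  have hh'0 : ∀ n, 0 ≤ h' n := fun n => div_nonneg (hg n) (by positivity)
  have hc : Tendsto (fun N : ℕ => ((N:ℝ))⁻¹ * ∑ n ∈ Finset.range N, h' n) atTop (nhds 0) :=
    h.cesaro
  have hpowt : Tendsto (fun N : ℕ => ((N:ℝ))^(d+1)) atTop atTop :=
    (tendsto_pow_atTop (Nat.succ_ne_zero d)).comp tendsto_natCast_atTop_atTop
  have hg0N : Tendsto (fun N : ℕ => g 0 / (N:ℝ)^(d+1)) atTop (nhds 0) :=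
    tendsto_const_nhds.div_atTop hpowt
  have hlim0 : Tendsto (fun N : ℕ => g 0 / (N:ℝ)^(d+1)
      + ((N:ℝ))⁻¹ * ∑ n ∈ Finset.range N, h' n) atTop (nhds 0) := by
    simpa using hg0N.add hc
  apply squeeze_zero' _ _ hlim0
  · filter_upwards with N
    exact div_nonneg (Finset.sum_nonneg fun i _ => hg i) (by positivity)
  · filter_upwards [eventually_ge_atTop 1] with N hN1
    have hNpos : (0:ℝ) < (N:ℝ) := by exact_mod_cast hN1
    have hNe : N = (N-1)+1 := (Nat.succ_pred_eq_of_pos hN1).symm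
    have e1 : ∑ n ∈ Finset.range N, g n = (∑ i ∈ Finset.range (N-1), g (i+1)) + g 0 := by
      conv_lhs => rw [hNe]
      exact Finset.sum_range_succ' g (N-1)
    have e2 : ∑ i ∈ Finset.range (N-1), h' (i+1) ≤ ∑ n ∈ Finset.range N, h' n := by
      conv_rhs => rw [hNe]
      rw [Finset.sum_range_succ' h' (N-1)]
      linarith [hh'0 0]
    have e3 : ∀ i ∈ Finset.range (N-1), g (i+1) ≤ (N:ℝ)^d * h' (i+1) := by
      intro i hi
      have hi' : i + 1 ≤ N := by have := Finset.mem_range.1 hi; omega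
      have hp : (0:ℝ) < ((i+1:ℕ):ℝ)^d := by positivity
      have hgi : g (i+1) = ((i+1:ℕ):ℝ)^d * h' (i+1) := by
        rw [hh'def]; field_simp
      rw [hgi]
      have hle : ((i+1:ℕ):ℝ)^d ≤ (N:ℝ)^d :=
        pow_le_pow_left₀ (by positivity) (by exact_mod_cast hi') d
      exact mul_le_mul_of_nonneg_right hle (hh'0 _)
    have hsum : ∑ n ∈ Finset.range N, g n
        ≤ g 0 + (N:ℝ)^d * ∑ n ∈ Finset.range N, h' n := by
      calc ∑ n ∈ Finset.range N, g n
          = (∑ i ∈ Finset.range (N-1), g (i+1)) + g 0 := e1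
        _ ≤ (∑ i ∈ Finset.range (N-1), (N:ℝ)^d * h' (i+1)) + g 0 := by
            gcongr with i hi
            exact e3 i hi
        _ = (N:ℝ)^d * (∑ i ∈ Finset.range (N-1), h' (i+1)) + g 0 := by
            rw [Finset.mul_sum]
        _ ≤ (N:ℝ)^d * (∑ n ∈ Finset.range N, h' n) + g 0 := by
            gcongr
        _ = g 0 + (N:ℝ)^d * ∑ n ∈ Finset.range N, h' n := by ring
    have hdiv : (N:ℝ)^d * (∑ n ∈ Finset.range N, h' n) / (N:ℝ)^(d+1)
        = ((N:ℝ))⁻¹ * ∑ n ∈ Finset.range N, h' n := by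
      rw [pow_succ]
      field_simp
    calc (∑ n ∈ Finset.range N, g n) / (N:ℝ)^(d+1)
        ≤ (g 0 + (N:ℝ)^d * ∑ n ∈ Finset.range N, h' n) / (N:ℝ)^(d+1) := by
          gcongr
      _ = g 0 / (N:ℝ)^(d+1) + ((N:ℝ))⁻¹ * ∑ n ∈ Finset.range N, h' n := by
          rw [add_div, hdiv]

theorem sum_tendsto_zero_uniformly (d : ℕ) (f : ℕ → ℝ) (hf : ∀ n, 0 < f n)
    (hlim : Tendsto (fun n => f n / (n : ℝ) ^ d) atTop (nhds 1))
    (C : ℝ) (hC : 0 ≤ C) (ε : ℕ → ℂ) (hε : ∀ N : ℕ, ‖ε N‖ ≤ C / N)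
    (K : Set ℂ) (hK : IsCompact K)
    (hK1 : K ⊆ {η : ℂ | ‖η‖ = 1 ∧ η ≠ 1}) :
    TendstoUniformlyOn
      (fun (N : ℕ) (η : ℂ) => (1 / (N : ℂ) ^ (d + 1)) *
        ∑ n ∈ Finset.range N, (f n : ℂ) * (η + ε N) ^ n)
      (fun _ => 0) atTop K := by
  rcases K.eq_empty_or_nonempty with rfl | hKne
  · exact tendstoUniformlyOn_empty
  obtain ⟨η₀, hη₀K, hmin⟩ := hK.exists_isMinOn hKne
    ((continuous_id.sub continuous_const).norm.continuousOn)
  set δ : ℝ := ‖η₀ - 1‖ with hδdef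
  have hδpos : 0 < δ := by
    rw [hδdef, norm_pos_iff]
    exact sub_ne_zero.2 (hK1 hη₀K).2
  have hδK : ∀ η ∈ K, δ ≤ ‖η - 1‖ := fun η hη => hmin hη
  set B : ℝ := 2 * (Real.exp C + 1) / δ with hBdef
  have hBpos : 0 < B := by
    have := Real.exp_pos C
    rw [hBdef]; positivity
  set g : ℕ → ℝ := fun n => |f n - (n:ℝ)^d| with hgdef
  have hg0 : ∀ n, 0 ≤ g n := fun n => abs_nonneg _
  -- g n / n^d → 0
  have hgto : Tendsto (fun n => g n / (n:ℝ)^d) atTop (nhds 0) := by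
    have h1 : Tendsto (fun n => |f n / (n:ℝ)^d - 1|) atTop (nhds 0) := by
      have := (hlim.sub_const 1).abs
      simpa using this
    apply h1.congr'
    filter_upwards [eventually_ge_atTop 1] with n hn
    have hn' : (0:ℝ) < (n:ℝ)^d := by
      have : (0:ℝ) < (n:ℝ) := by exact_mod_cast hn
      positivity
    have e : f n / (n:ℝ)^d - 1 = (f n - (n:ℝ)^d) / (n:ℝ)^d := by
      field_simp
    rw [e, abs_div, abs_of_pos hn']
  have hv : Tendsto (fun N : ℕ => (∑ n ∈ Finset.range N, g n) / (N:ℝ)^(d+1))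
      atTop (nhds 0) := aux_cesaro d g hg0 hgto
  have hCN : Tendsto (fun N : ℕ => C / (N:ℝ)) atTop (nhds 0) :=
    tendsto_const_div_atTop_nhds_zero_nat C
  -- the dominating sequence
  set u : ℕ → ℝ := fun N =>
    (2*B*(N:ℝ)^d + Real.exp C * ∑ n ∈ Finset.range N, g n) / (N:ℝ)^(d+1) with hudef
  have hu : Tendsto u atTop (nhds 0) := by
    have h1 : Tendsto (fun N:ℕ => (2*B)/(N:ℝ)) atTop (nhds 0) :=
      tendsto_const_div_atTop_nhds_zero_nat (2*B)
    have h2 := hv.const_mul (Real.exp C)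
    have h3 : Tendsto (fun N:ℕ => (2*B)/(N:ℝ)
        + Real.exp C * ((∑ n ∈ Finset.range N, g n) / (N:ℝ)^(d+1))) atTop (nhds 0) := by
      simpa using h1.add h2
    apply h3.congr'
    filter_upwards [eventually_ge_atTop 1] with N hN1
    have hNpos : (0:ℝ) < (N:ℝ) := by exact_mod_cast hN1
    simp only [hudef]
    rw [add_div, pow_succ]
    have hNd : (0:ℝ) < (N:ℝ)^d := by positivity
    field_simp
  -- the key bound
  have key : ∀ᶠ N : ℕ in atTop, ∀ η ∈ K,
      ‖(1 / (N : ℂ) ^ (d + 1)) * ∑ n ∈ Finset.range N, (f n : ℂ) * (η + ε N) ^ n‖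
        ≤ u N := by
    filter_upwards [eventually_ge_atTop 1,
      hCN.eventually (eventually_lt_nhds (half_pos hδpos))] with N hN1 hN2 η hη
    have hNpos : (0:ℝ) < (N:ℝ) := by exact_mod_cast hN1
    set z : ℂ := η + ε N with hzdef
    have hηn : ‖η‖ = 1 := (hK1 hη).1
    have hz_norm : ‖z‖ ≤ 1 + C/N := by
      calc ‖z‖ ≤ ‖η‖ + ‖ε N‖ := norm_add_le _ _
        _ ≤ 1 + C/N := by rw [hηn]; linarith [hε N]
    have hzpow : ∀ n, n ≤ N → ‖z‖^n ≤ Real.exp C := by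
      intro n hn
      have hb : (0:ℝ) ≤ 1 + C/N := by positivity
      calc ‖z‖^n ≤ (1 + C/N)^n := pow_le_pow_left₀ (norm_nonneg _) hz_norm n
        _ ≤ Real.exp (C/N) ^ n := by
            apply pow_le_pow_left₀ hb
            linarith [Real.add_one_le_exp (C/N)]
        _ = Real.exp ((n:ℝ) * (C/N)) := by rw [Real.exp_nat_mul]
        _ ≤ Real.exp C := by
            apply Real.exp_le_exp.2
            have h1 : (n:ℝ) * (C/N) ≤ (N:ℝ) * (C/N) := by
              have ha : (n:ℝ) ≤ (N:ℝ) := by exact_mod_cast hn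
              have hb2 : (0:ℝ) ≤ C/N := by positivity
              nlinarith
            have h2 : (N:ℝ) * (C/N) = C := by field_simp
            linarith
    have hz1 : δ/2 ≤ ‖z - 1‖ := by
      have e : z - 1 = (η - 1) + ε N := by rw [hzdef]; ring
      have h1 : ‖η - 1‖ - ‖ε N‖ ≤ ‖(η - 1) + ε N‖ := by
        have := norm_sub_norm_le (η - 1) (-(ε N))
        simpa [sub_neg_eq_add] using this
      have := hδK η hη
      have := hε N
      rw [e]
      linarith
    have hzne1 : z ≠ 1 := by
      intro h
      rw [h, sub_self, norm_zero] at hz1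
      linarith
    have hS : ∀ k, k ≤ N → ‖∑ n ∈ Finset.range k, z^n‖ ≤ B := by
      intro k hk
      rw [geom_sum_eq hzne1, norm_div]
      have hnum : ‖z^k - 1‖ ≤ Real.exp C + 1 := by
        calc ‖z^k - 1‖ ≤ ‖z^k‖ + ‖(1:ℂ)‖ := norm_sub_le _ _
          _ = ‖z‖^k + 1 := by rw [norm_pow, norm_one]
          _ ≤ Real.exp C + 1 := by linarith [hzpow k hk]
      calc ‖z^k - 1‖ / ‖z - 1‖ ≤ (Real.exp C + 1) / (δ/2) :=
            div_le_div₀ (by positivity) hnum (half_pos hδpos) hz1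
        _ = B := by rw [hBdef]; field_simp
    have hAbel : ‖∑ n ∈ Finset.range N, ((n:ℂ))^d * z^n‖ ≤ 2*B*(N:ℝ)^d := by
      have hby := Finset.sum_range_by_parts (fun i => ((i:ℕ):ℂ)^d) (fun i => z^i) N
      simp only [smul_eq_mul] at hby
      rw [hby]
      have hA : ‖((N-1:ℕ):ℂ)^d * ∑ i ∈ Finset.range N, z^i‖ ≤ (N:ℝ)^d * B := by
        rw [norm_mul, norm_pow, Complex.norm_natCast]
        have h1 : ((N-1:ℕ):ℝ)^d ≤ (N:ℝ)^d := by
          apply pow_le_pow_left₀ (by positivity)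
          exact_mod_cast Nat.sub_le N 1
        exact mul_le_mul h1 (hS N le_rfl) (norm_nonneg _) (by positivity)
      have hterm : ∀ i ∈ Finset.range (N-1),
          ‖(((i+1:ℕ):ℂ)^d - ((i:ℕ):ℂ)^d) * ∑ j ∈ Finset.range (i+1), z^j‖
            ≤ (((i+1:ℕ):ℝ)^d - ((i:ℕ):ℝ)^d) * B := by
        intro i hi
        have hi' : i + 1 ≤ N := by have := Finset.mem_range.1 hi; omega
        rw [norm_mul]
        have hc : ((i+1:ℕ):ℂ)^d - ((i:ℕ):ℂ)^d
            = ((((i+1:ℕ):ℝ)^d - ((i:ℕ):ℝ)^d : ℝ) : ℂ) := by push_cast; ring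
        have hmono : ((i:ℕ):ℝ)^d ≤ ((i+1:ℕ):ℝ)^d := by
          apply pow_le_pow_left₀ (by positivity)
          exact_mod_cast Nat.le_succ i
        have hn : ‖((i+1:ℕ):ℂ)^d - ((i:ℕ):ℂ)^d‖ = ((i+1:ℕ):ℝ)^d - ((i:ℕ):ℝ)^d := by
          rw [hc, Complex.norm_real, Real.norm_eq_abs, _root_.abs_of_nonneg (by linarith)]
        rw [hn]
        exact mul_le_mul_of_nonneg_left (hS (i+1) hi') (by linarith)
      have hSum : ‖∑ i ∈ Finset.range (N-1),
          (((i+1:ℕ):ℂ)^d - ((i:ℕ):ℂ)^d) * ∑ j ∈ Finset.range (i+1), z^j‖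
            ≤ (N:ℝ)^d * B := by
        calc ‖∑ i ∈ Finset.range (N-1),
            (((i+1:ℕ):ℂ)^d - ((i:ℕ):ℂ)^d) * ∑ j ∈ Finset.range (i+1), z^j‖
            ≤ ∑ i ∈ Finset.range (N-1),
              ‖(((i+1:ℕ):ℂ)^d - ((i:ℕ):ℂ)^d) * ∑ j ∈ Finset.range (i+1), z^j‖ :=
                norm_sum_le _ _
          _ ≤ ∑ i ∈ Finset.range (N-1), (((i+1:ℕ):ℝ)^d - ((i:ℕ):ℝ)^d) * B :=
                Finset.sum_le_sum hterm
          _ = (((N-1:ℕ):ℝ)^d - ((0:ℕ):ℝ)^d) * B := by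
                rw [← Finset.sum_mul, Finset.sum_range_sub (fun i => ((i:ℕ):ℝ)^d)]
          _ ≤ (N:ℝ)^d * B := by
                have h1 : ((N-1:ℕ):ℝ)^d ≤ (N:ℝ)^d := by
                  apply pow_le_pow_left₀ (by positivity)
                  exact_mod_cast Nat.sub_le N 1
                have h2 : (0:ℝ) ≤ (((0:ℕ)):ℝ)^d := by positivity
                nlinarith
      calc ‖((N-1:ℕ):ℂ)^d * ∑ i ∈ Finset.range N, z^i
            - ∑ i ∈ Finset.range (N-1),
              (((i+1:ℕ):ℂ)^d - ((i:ℕ):ℂ)^d) * ∑ j ∈ Finset.range (i+1), z^j‖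
          ≤ ‖((N-1:ℕ):ℂ)^d * ∑ i ∈ Finset.range N, z^i‖
            + ‖∑ i ∈ Finset.range (N-1),
              (((i+1:ℕ):ℂ)^d - ((i:ℕ):ℂ)^d) * ∑ j ∈ Finset.range (i+1), z^j‖ :=
            norm_sub_le _ _
        _ ≤ (N:ℝ)^d * B + (N:ℝ)^d * B := add_le_add hA hSum
        _ = 2*B*(N:ℝ)^d := by ring
    have hsplit : ∑ n ∈ Finset.range N, (f n : ℂ) * z^n
        = (∑ n ∈ Finset.range N, ((n:ℂ))^d * z^n)
          + ∑ n ∈ Finset.range N, (((f n - (n:ℝ)^d : ℝ)):ℂ) * z^n := by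
      rw [← Finset.sum_add_distrib]
      apply Finset.sum_congr rfl
      intro n _
      push_cast
      ring
    have herr : ‖∑ n ∈ Finset.range N, (((f n - (n:ℝ)^d : ℝ)):ℂ) * z^n‖
        ≤ Real.exp C * ∑ n ∈ Finset.range N, g n := by
      calc ‖∑ n ∈ Finset.range N, (((f n - (n:ℝ)^d : ℝ)):ℂ) * z^n‖
          ≤ ∑ n ∈ Finset.range N, ‖(((f n - (n:ℝ)^d : ℝ)):ℂ) * z^n‖ := norm_sum_le _ _
        _ ≤ ∑ n ∈ Finset.range N, g n * Real.exp C := by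
            apply Finset.sum_le_sum
            intro n hn
            rw [norm_mul, Complex.norm_real, Real.norm_eq_abs, norm_pow]
            exact mul_le_mul_of_nonneg_left
              (hzpow n (le_of_lt (Finset.mem_range.1 hn))) (hg0 n)
        _ = Real.exp C * ∑ n ∈ Finset.range N, g n := by
            rw [← Finset.sum_mul]; ring
    have htot : ‖∑ n ∈ Finset.range N, (f n : ℂ) * z^n‖
        ≤ 2*B*(N:ℝ)^d + Real.exp C * ∑ n ∈ Finset.range N, g n := by
      rw [hsplit]
      calc ‖(∑ n ∈ Finset.range N, ((n:ℂ))^d * z^n)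
            + ∑ n ∈ Finset.range N, (((f n - (n:ℝ)^d : ℝ)):ℂ) * z^n‖
          ≤ ‖∑ n ∈ Finset.range N, ((n:ℂ))^d * z^n‖
            + ‖∑ n ∈ Finset.range N, (((f n - (n:ℝ)^d : ℝ)):ℂ) * z^n‖ := norm_add_le _ _
        _ ≤ 2*B*(N:ℝ)^d + Real.exp C * ∑ n ∈ Finset.range N, g n := add_le_add hAbel herr
    have hfac : ‖(1 / (N : ℂ) ^ (d + 1))‖ = 1 / (N:ℝ)^(d+1) := by
      rw [norm_div, norm_one, norm_pow, Complex.norm_natCast]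
    rw [norm_mul, hfac]
    calc 1 / (N:ℝ)^(d+1) * ‖∑ n ∈ Finset.range N, (f n : ℂ) * z^n‖
        ≤ 1 / (N:ℝ)^(d+1) * (2*B*(N:ℝ)^d + Real.exp C * ∑ n ∈ Finset.range N, g n) :=
          mul_le_mul_of_nonneg_left htot (by positivity)
      _ = u N := by
          simp only [hudef]
          rw [one_div, inv_mul_eq_div]
  -- conclude
  rw [Metric.tendstoUniformlyOn_iff]
  intro ep hep
  have huev : ∀ᶠ N : ℕ in atTop, |u N| < ep := by
    have := Metric.tendsto_nhds.1 hu ep hep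
    simpa [Real.dist_eq] using this
  filter_upwards [key, huev] with N hb hu' η hη
  rw [dist_eq_norm]
  simp only [zero_sub, norm_neg]
  calc ‖(1 / (N : ℂ) ^ (d + 1)) * ∑ n ∈ Finset.range N, (f n : ℂ) * (η + ε N) ^ n‖
      ≤ u N := hb η hη
    _ ≤ |u N| := le_abs_self _
    _ < ep := hu'
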